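/- For any n > 0 and any positive integer p, 2^p · (n/p)^p ≤ e^(2n/e). -/

import Mathlib

/-- For any real `n > 0` and any positive integer `p`,
`2^p * (n/p)^p ≤ e^(2n/e)`. -/
theorem two_pow_mul_div_pow_le (n : ℝ) (hn : 0 < n) (p : ℕ) (hp : 0 < p) :
    (2 : ℝ) ^ p * (n / p) ^ p ≤ Real.exp (2 * n / Real.exp 1) := by
  have hp' : (0:ℝ) < p := by exact_mod_cast hp
  have hx : (0:ℝ) < 2 * n / p := by positivity
  have h1 : (2 : ℝ) ^ p * (n / p) ^ p = (2 * n / p) ^ p := by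
    rw [← mul_pow]; ring_nf
  have hlog : Real.log (2 * n / p) ≤ (2 * n / p) / Real.exp 1 := by
    have h2 := Real.log_le_sub_one_of_pos (x := 2 * n / p / Real.exp 1) (by positivity)
    rw [Real.log_div (ne_of_gt hx) (ne_of_gt (Real.exp_pos 1)), Real.log_exp] at h2
    linarith
  rw [h1, ← Real.exp_log hx, ← Real.exp_nat_mul, Real.exp_le_exp]
  calc (p:ℝ) * Real.log (2 * n / p) ≤ p * ((2 * n / p) / Real.exp 1) := by
        exact mul_le_mul_of_nonneg_left hlog hp'.le
    _ = 2 * n / Real.exp 1 := by field_simp
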